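/- Let 0 < λ < 1 and 0 < q < 1, and define G(z) := λz/((1−z)^q + λ) for real z < 1. Then the derivative of G tends to +∞ as z tends to 1 from the left: Tendsto (deriv G) (𝓝[<] 1) atTop. (Hence the expected waiting time E[T^q] is infinite for 0 < q < 1: the waiting time is heavy-tailed.) -/

import Mathlib

open Filter Topology

/-- For `0 < q < 1`, the derivative of the waiting-time probability generating function
`G(z) = λz/((1−z)^q + λ)` tends to `+∞` as `z → 1⁻`: the mean waiting time is infinite. -/
theorem deriv_pgf_tendsto_atTop (lam q : ℝ) (hlam0 : 0 < lam) (hlam1 : lam < 1)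
    (hq0 : 0 < q) (hq1 : q < 1) :
    Tendsto (deriv fun w : ℝ => lam * w / ((1 - w) ^ q + lam)) (𝓝[<] (1 : ℝ)) atTop := by
  set F : ℝ → ℝ := fun w =>
    (lam * ((1 - w) ^ q + lam) + lam * w * (q * (1 - w) ^ (q - 1))) / ((1 - w) ^ q + lam) ^ 2
    with hF
  have hmem : ∀ᶠ w in 𝓝[<] (1 : ℝ), w < 1 := by
    filter_upwards [self_mem_nhdsWithin] with w hw using hw
  have hderiv : ∀ w : ℝ, w < 1 →
      deriv (fun w : ℝ => lam * w / ((1 - w) ^ q + lam)) w = F w := by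
    intro w hw
    have h1 : (0 : ℝ) < 1 - w := by linarith
    have hden : (1 - w) ^ q + lam ≠ 0 := by positivity
    have hA : HasDerivAt (fun w : ℝ => (1 - w) ^ q) (q * (1 - w) ^ (q - 1) * (-1)) w := by
      have hb : HasDerivAt (fun w : ℝ => 1 - w) (-1) w := by
        simpa using (hasDerivAt_const w (1 : ℝ)).fun_sub (hasDerivAt_id' w)
      have := (Real.hasDerivAt_rpow_const (x := 1 - w) (p := q) (Or.inl h1.ne')).comp w hb
      simpa [mul_comm, Function.comp_def] using this
    have hnum : HasDerivAt (fun w : ℝ => lam * w) lam w := by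
      simpa using (hasDerivAt_id w).const_mul lam
    have hdiv := hnum.fun_div (hA.add_const lam) hden
    rw [hdiv.deriv, hF]
    ring
  have hcongr : deriv (fun w : ℝ => lam * w / ((1 - w) ^ q + lam)) =ᶠ[𝓝[<] (1 : ℝ)] F := by
    filter_upwards [hmem] with w hw using hderiv w hw
  rw [tendsto_congr' hcongr]
  -- limits
  have h1w : Tendsto (fun w : ℝ => 1 - w) (𝓝[<] (1 : ℝ)) (𝓝[>] 0) := by
    apply tendsto_nhdsWithin_of_tendsto_nhds_of_eventually_within
    · have : Tendsto (fun w : ℝ => 1 - w) (𝓝 (1 : ℝ)) (𝓝 0) := by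
        have h0 : Continuous (fun w : ℝ => 1 - w) := by continuity
        simpa using h0.tendsto (1 : ℝ)
      exact this.mono_left nhdsWithin_le_nhds
    · filter_upwards [hmem] with w hw
      simpa using sub_pos.mpr hw
  have hpow0 : ∀ p : ℝ, 0 < p →
      Tendsto (fun w : ℝ => (1 - w) ^ p) (𝓝[<] (1 : ℝ)) (𝓝 0) := by
    intro p hp
    have hc : ContinuousAt (fun x : ℝ => x ^ p) 0 :=
      Real.continuousAt_rpow_const 0 p (Or.inr hp.le)
    have := hc.tendsto.comp (h1w.mono_right nhdsWithin_le_nhds)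
    simpa [Real.zero_rpow hp.ne', Function.comp_def] using this
  have hAtop : Tendsto (fun w : ℝ => (1 - w) ^ (q - 1)) (𝓝[<] (1 : ℝ)) atTop := by
    have heq : (fun w : ℝ => (1 - w) ^ (q - 1)) =ᶠ[𝓝[<] (1 : ℝ)]
        fun w => ((1 - w) ^ (1 - q))⁻¹ := by
      filter_upwards [hmem] with w hw
      have h1 : (0 : ℝ) < 1 - w := by linarith
      rw [← Real.rpow_neg h1.le]
      ring_nf
    rw [tendsto_congr' heq]
    apply Filter.Tendsto.inv_tendsto_nhdsGT_zero
    apply tendsto_nhdsWithin_of_tendsto_nhds_of_eventually_within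
    · exact hpow0 (1 - q) (by linarith)
    · filter_upwards [hmem] with w hw
      have h1 : (0 : ℝ) < 1 - w := by linarith
      exact Real.rpow_pos_of_pos h1 _
  -- denominator tends to lam, its square's inverse tends to (lam^2)⁻¹
  have hden : Tendsto (fun w : ℝ => (1 - w) ^ q + lam) (𝓝[<] (1 : ℝ)) (𝓝 lam) := by
    simpa using (hpow0 q hq0).add tendsto_const_nhds
  have hdeninv : Tendsto (fun w : ℝ => (((1 - w) ^ q + lam) ^ 2)⁻¹) (𝓝[<] (1 : ℝ))
      (𝓝 ((lam ^ 2)⁻¹)) := by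
    exact ((hden.pow 2).inv₀ (by positivity))
  -- numerator tends to atTop
  have hnum : Tendsto (fun w : ℝ => lam * ((1 - w) ^ q + lam) + lam * w * (q * (1 - w) ^ (q - 1)))
      (𝓝[<] (1 : ℝ)) atTop := by
    have h2 : Tendsto (fun w : ℝ => lam * w * q) (𝓝[<] (1 : ℝ)) (𝓝 (lam * 1 * q)) := by
      apply Tendsto.mul _ tendsto_const_nhds
      exact (tendsto_const_nhds.mul (tendsto_id.mono_left nhdsWithin_le_nhds))
    have h3 : Tendsto (fun w : ℝ => lam * w * q * (1 - w) ^ (q - 1)) (𝓝[<] (1 : ℝ)) atTop :=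
      Filter.Tendsto.pos_mul_atTop (by positivity) h2 hAtop
    have h4 : Tendsto (fun w : ℝ => lam * ((1 - w) ^ q + lam)) (𝓝[<] (1 : ℝ))
        (𝓝 (lam * lam)) := tendsto_const_nhds.mul hden
    have := h4.add_atTop h3
    simpa [mul_assoc] using this
  have : Tendsto (fun w : ℝ =>
      (lam * ((1 - w) ^ q + lam) + lam * w * (q * (1 - w) ^ (q - 1))) *
        (((1 - w) ^ q + lam) ^ 2)⁻¹) (𝓝[<] (1 : ℝ)) atTop :=
    Filter.Tendsto.atTop_mul_pos (by positivity) hnum hdeninv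
  simpa [hF, div_eq_mul_inv] using this
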